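/- Fix h1 > 0, α ∈ (0,1], A > 0, b ≥ 0, and define f(t) = (1/2)·log(1 + 2·h1²·α²·A²/(π·e)) − (1/2)·log((1 + he²·α²·A²/3 + t/3)/(1 + 2·t/(π·e))) for t ≥ 0, where he > 0. Then f is strictly increasing on [0,∞) if and only if he²·α²·A² > π·e/2 − 3. -/

import Mathlib

open Real

theorem jamming_strong_user_rate_increasing_iff
    (h1 he α A b : ℝ)
    (hh1 : 0 < h1) (hhe : 0 < he)
    (hα : α ∈ Set.Ioc (0 : ℝ) 1) (hA : 0 < A) (hb : 0 ≤ b)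
    (f : ℝ → ℝ)
    (hf : ∀ t, f t = (1 / 2) * Real.log (1 + 2 * h1 ^ 2 * α ^ 2 * A ^ 2 / (π * exp 1)) -
        (1 / 2) * Real.log ((1 + he ^ 2 * α ^ 2 * A ^ 2 / 3 + t / 3) /
          (1 + 2 * t / (π * exp 1)))) :
    StrictMonoOn f (Set.Ici 0) ↔ he ^ 2 * α ^ 2 * A ^ 2 > π * exp 1 / 2 - 3 := by
  have hp : (0:ℝ) < π * exp 1 := mul_pos Real.pi_pos (Real.exp_pos 1)
  have hα0 : 0 < α := hα.1
  set c : ℝ := he ^ 2 * α ^ 2 * A ^ 2 with hcdef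
  have hc0 : 0 < c := by positivity
  have hden : ∀ t : ℝ, 0 ≤ t → 0 < 1 + 2 * t / (π * exp 1) := by
    intro t ht
    have : 0 ≤ 2 * t / (π * exp 1) := by positivity
    linarith
  have hnum : ∀ t : ℝ, 0 ≤ t → 0 < 1 + c / 3 + t / 3 := by
    intro t ht; nlinarith
  have hu : ∀ t : ℝ, 0 ≤ t →
      0 < (1 + c / 3 + t / 3) / (1 + 2 * t / (π * exp 1)) := by
    intro t ht; exact div_pos (hnum t ht) (hden t ht)
  constructor
  · intro hmono
    have h01 : f 0 < f 1 := hmono (Set.mem_Ici.mpr le_rfl) (by norm_num) (by norm_num)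
    rw [hf 0, hf 1] at h01
    have hlog : Real.log ((1 + c / 3 + 1 / 3) / (1 + 2 * 1 / (π * exp 1))) <
        Real.log ((1 + c / 3 + 0 / 3) / (1 + 2 * 0 / (π * exp 1))) := by
      linarith
    have hlt := (Real.log_lt_log_iff (hu 1 (by norm_num)) (hu 0 le_rfl)).mp hlog
    rw [div_lt_div_iff₀ (hden 1 (by norm_num)) (hden 0 le_rfl)] at hlt
    have hexp : (1 + c / 3 + 0 / 3) * (1 + 2 * 1 / (π * exp 1)) -
        (1 + c / 3 + 1 / 3) * (1 + 2 * 0 / (π * exp 1))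
        = (2 * c + 6 - π * exp 1) / (3 * (π * exp 1)) := by
      field_simp
      ring
    have h9 : 0 < (2 * c + 6 - π * exp 1) / (3 * (π * exp 1)) := by linarith
    have h10 : 0 < 2 * c + 6 - π * exp 1 := by
      by_contra h
      push_neg at h
      have : (2 * c + 6 - π * exp 1) / (3 * (π * exp 1)) ≤ 0 :=
        div_nonpos_of_nonpos_of_nonneg h (by positivity)
      linarith
    linarith
  · intro hc t ht s hs hts
    rw [Set.mem_Ici] at ht hs
    rw [hf t, hf s]
    have key : (1 + c / 3 + s / 3) / (1 + 2 * s / (π * exp 1)) <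
        (1 + c / 3 + t / 3) / (1 + 2 * t / (π * exp 1)) := by
      rw [div_lt_div_iff₀ (hden s hs) (hden t ht)]
      have hexp : (1 + c / 3 + s / 3) * (1 + 2 * t / (π * exp 1)) -
          (1 + c / 3 + t / 3) * (1 + 2 * s / (π * exp 1))
          = -((s - t) * (2 * c + 6 - π * exp 1)) / (3 * (π * exp 1)) := by
        field_simp
        ring
      have h10 : -((s - t) * (2 * c + 6 - π * exp 1)) / (3 * (π * exp 1)) < 0 := by
        apply div_neg_of_neg_of_pos
        · nlinarith
        · positivity
      linarith
    have hlog := Real.log_lt_log (hu s hs) key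
    linarith
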